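/- Frozen-coefficient positivity via Plancherel (1D model of Van Hove's argument): let a_{ij,αβ} be constants satisfying the strong Hadamard–Legendre condition with constant ε > 0. Then for all Schwartz functions x : ℝⁿ → ℝ^ν, ∫ Σ a_{ij,αβ} ∂_i x^α ∂_j x^β dt ≥ ε ∫ |∇x|² dt, where |∇x|² = Σ_{i,α} (∂_i x^α)². -/

import Mathlib

open MeasureTheory Finset
open SchwartzMap Real Complex FourierTransform ComplexConjugate

section VanHoveAux

variable {V : Type*} [NormedAddCommGroup V] [InnerProductSpace ℝ V] [FiniteDimensional ℝ V]
  [MeasurableSpace V] [BorelSpace V]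

private lemma vh_htg_const {D : Type*} [NormedAddCommGroup D] [NormedSpace ℝ D] (c : ℝ) :
    Function.HasTemperateGrowth (fun _ : D => c) := by
  refine ⟨contDiff_const, fun nn => ⟨1, ‖c‖, fun x => ?_⟩⟩
  have h1 : (0:ℝ) ≤ ‖c‖ * (1 + ‖x‖) ^ 1 := by positivity
  rcases nn with _ | m
  · simpa using le_mul_of_one_le_right (norm_nonneg c) (by
      have := norm_nonneg x; nlinarith)
  · simpa [iteratedFDeriv_const_of_ne (Nat.succ_ne_zero m)] using h1

/-- Postcomposition with a continuous linear map, as a CLM on Schwartz space. -/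
private noncomputable def vhPostCLM {D E G : Type*} [NormedAddCommGroup D] [NormedSpace ℝ D]
    [NormedAddCommGroup E] [NormedSpace ℝ E] [NormedAddCommGroup G] [NormedSpace ℝ G]
    (L : E →L[ℝ] G) : 𝓢(D, E) →L[ℝ] 𝓢(D, G) :=
  SchwartzMap.bilinLeftCLM ((ContinuousLinearMap.lsmul ℝ ℝ : ℝ →L[ℝ] G →L[ℝ] G).flip.comp L)
    (vh_htg_const (1:ℝ))

@[simp] private lemma vhPostCLM_apply {D E G : Type*} [NormedAddCommGroup D] [NormedSpace ℝ D]
    [NormedAddCommGroup E] [NormedSpace ℝ E] [NormedAddCommGroup G] [NormedSpace ℝ G]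
    (L : E →L[ℝ] G) (f : 𝓢(D, E)) (t : D) :
    vhPostCLM L f t = L (f t) := by
  have : vhPostCLM L f t
      = ((ContinuousLinearMap.lsmul ℝ ℝ : ℝ →L[ℝ] G →L[ℝ] G).flip.comp L) (f t) (1:ℝ) := rfl
  rw [this]; simp

private noncomputable def vhConjCLM : ℂ →L[ℝ] ℂ :=
  (Complex.conjLIE : ℂ ≃ₗᵢ[ℝ] ℂ).toLinearIsometry.toContinuousLinearMap

@[simp] private lemma vhConjCLM_apply (z : ℂ) : vhConjCLM z = conj z := rfl

private lemma vh_fourier_conj (h : V → ℂ) (η : V) :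
    𝓕 (fun t => conj (h t)) η = conj (𝓕⁻ h η) := by
  rw [Real.fourier_eq, Real.fourierInv_eq, ← integral_conj]
  congr 1
  ext t
  simp only [Circle.smul_def, map_mul, Real.fourierChar_apply, smul_eq_mul]
  congr 1
  rw [← Complex.exp_conj]
  congr 1
  rw [map_mul, Complex.conj_ofReal, Complex.conj_I]
  push_cast
  ring

private lemma vh_innerₗ_flip : (innerₗ V).flip = innerₗ V := by
  apply LinearMap.ext; intro v; apply LinearMap.ext; intro w
  simpa using real_inner_comm w v

/-- Parseval/Plancherel identity for Schwartz functions. -/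
private lemma vh_parseval (f g : 𝓢(V, ℂ)) :
    ∫ t, f t * conj (g t) = ∫ η, 𝓕 (⇑f) η * conj (𝓕 (⇑g) η) := by
  set Fg : 𝓢(V, ℂ) := SchwartzMap.fourierTransformCLM ℝ g with hFg
  set gc : 𝓢(V, ℂ) := vhPostCLM vhConjCLM Fg with hgc
  have hgc_coe : ⇑gc = fun η => conj (𝓕 (⇑g) η) := by
    funext η
    rw [hgc, vhPostCLM_apply, vhConjCLM_apply, hFg, SchwartzMap.fourierTransformCLM_apply,
      SchwartzMap.fourier_coe]
  have hFgc : 𝓕 (⇑gc) = fun t => conj (g t) := by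
    funext t
    rw [hgc_coe]
    rw [vh_fourier_conj (fun η => 𝓕 (⇑g) η) t]
    congr 1
    have : 𝓕⁻ (𝓕 ⇑g) = ⇑((FourierTransform.fourierCLE ℝ 𝓢(V, ℂ) (F := 𝓢(V, ℂ))).symm
        ((FourierTransform.fourierCLE ℝ 𝓢(V, ℂ) (F := 𝓢(V, ℂ))) g)) := by
      rw [FourierTransform.fourierCLE_symm_apply, FourierTransform.fourierCLE_apply,
        SchwartzMap.fourierInv_coe, SchwartzMap.fourier_coe]
    rw [this, ContinuousLinearEquiv.symm_apply_apply]
  have key := VectorFourier.integral_bilin_fourierIntegral_eq_flip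
    (E := ℂ) (F := ℂ) (G := ℂ) (V := V) (W := V) (μ := volume) (ν := volume)
    (L := innerₗ V) (f := ⇑f) (g := ⇑gc)
    (ContinuousLinearMap.mul ℂ ℂ) Real.continuous_fourierChar
    (by exact continuous_inner) f.integrable gc.integrable
  rw [vh_innerₗ_flip] at key
  calc ∫ t, f t * conj (g t) = ∫ t, f t * 𝓕 (⇑gc) t := by rw [hFgc]
    _ = ∫ η, 𝓕 (⇑f) η * gc η := key.symm
    _ = ∫ η, 𝓕 (⇑f) η * conj (𝓕 (⇑g) η) := by rw [hgc_coe]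

/-- Fourier transform of a partial derivative of a Schwartz function. -/
private lemma vh_fourier_pderiv (f : 𝓢(V, ℂ)) (m : V) (η : V) :
    𝓕 (fun t => fderiv ℝ (⇑f) t m) η
      = (((2 * π * (inner ℝ η m : ℝ) : ℝ)) : ℂ) * Complex.I * 𝓕 (⇑f) η := by
  have hint : Integrable (fderiv ℝ (⇑f)) volume := by
    have : fderiv ℝ (⇑f) = ⇑(SchwartzMap.fderivCLM ℝ V ℂ f) := by
      funext t; simp [SchwartzMap.fderivCLM_apply]
    rw [this]; exact (SchwartzMap.fderivCLM ℝ V ℂ f).integrable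
  have h1 : 𝓕 (fun t => fderiv ℝ (⇑f) t m) η = (𝓕 (fderiv ℝ (⇑f)) η) m :=
    (Real.fourier_continuousLinearMap_apply hint).symm
  rw [h1, Real.fourier_fderiv f.integrable (f.differentiable) hint]
  simp [VectorFourier.fourierSMulRight_apply]
  have e : ((((innerSL ℝ) η) m : ℝ) : ℂ) = ((inner ℝ η m : ℝ) : ℂ) := rfl
  rw [e]
  ring

/-- Product of a Schwartz function with the conjugate of another is integrable. -/
private lemma vh_int_mul_conj (f g : 𝓢(V, ℂ)) :
    Integrable (fun t => f t * conj (g t)) volume := by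
  have hg : Integrable (fun t => conj (g t)) volume := by
    have : (fun t => conj (g t)) = ⇑(vhPostCLM vhConjCLM g) := by
      funext t; rw [vhPostCLM_apply, vhConjCLM_apply]
    rw [this]; exact (vhPostCLM vhConjCLM g).integrable
  refine hg.bdd_mul (c := ‖f.toBoundedContinuousFunction‖) f.continuous.aestronglyMeasurable ?_
  exact ae_of_all _ fun t => f.toBoundedContinuousFunction.norm_coe_le_norm t

private lemma vh_int_mul_real (f g : 𝓢(V, ℝ)) :
    Integrable (fun t => f t * g t) volume := by
  refine g.integrable.bdd_mul (c := ‖f.toBoundedContinuousFunction‖)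
    f.continuous.aestronglyMeasurable ?_
  exact ae_of_all _ fun t => f.toBoundedContinuousFunction.norm_coe_le_norm t

/-- Algebra: factor a double sum. -/
private lemma vh_sum_alg1 {k l : ℕ} (c : ℝ) (A : Fin k → ℝ) (B : Fin l → ℝ) :
    ∑ i, ∑ α, c * (A i * A i * B α) = c * ((∑ α, B α) * (∑ i, (A i)^2)) := by
  calc ∑ i, ∑ α, c * (A i * A i * B α)
      = ∑ i, (c * (A i)^2 * ∑ α, B α) := by
        refine Finset.sum_congr rfl (fun i _ => ?_)
        rw [Finset.mul_sum]
        exact Finset.sum_congr rfl (fun α _ => by ring)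
    _ = (∑ i, c * (A i)^2) * ∑ α, B α := by rw [Finset.sum_mul]
    _ = c * ((∑ α, B α) * (∑ i, (A i)^2)) := by rw [← Finset.mul_sum]; ring

/-- Algebra: split a quadruple sum. -/
private lemma vh_sum_alg2 {k l : ℕ} (c : ℝ) (a : Fin k → Fin k → Fin l → Fin l → ℝ)
    (w : Fin k → ℝ) (p q : Fin l → ℝ) :
    ∑ i, ∑ j, ∑ α, ∑ β, a i j α β * (c * (w i * w j * (p α * p β + q α * q β)))
      = c * (∑ i, ∑ j, ∑ α, ∑ β, a i j α β * p α * p β * w i * w j)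
        + c * (∑ i, ∑ j, ∑ α, ∑ β, a i j α β * q α * q β * w i * w j) := by
  simp_rw [Finset.mul_sum, ← Finset.sum_add_distrib]
  refine Finset.sum_congr rfl fun i _ => Finset.sum_congr rfl fun j _ =>
    Finset.sum_congr rfl fun α _ => Finset.sum_congr rfl fun β _ => by ring

/-- Pull a double sum out of an integral. -/
private lemma vh_int_sum2 {k l : ℕ} {W : Type*} [MeasureSpace W]
    (g : Fin k → Fin l → W → ℝ) (hg : ∀ i α, Integrable (g i α) volume) :
    ∫ t, ∑ i, ∑ α, g i α t = ∑ i, ∑ α, ∫ t, g i α t := by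
  rw [integral_finset_sum _ (fun i _ => integrable_finset_sum _ (fun α _ => hg i α))]
  exact Finset.sum_congr rfl fun i _ => integral_finset_sum _ (fun α _ => hg i α)

/-- Pull a quadruple sum with constants out of an integral. -/
private lemma vh_int_sum4 {k l : ℕ} {W : Type*} [MeasureSpace W]
    (c : Fin k → Fin k → Fin l → Fin l → ℝ) (g : Fin k → Fin k → Fin l → Fin l → W → ℝ)
    (hg : ∀ i j α β, Integrable (g i j α β) volume) :
    ∫ t, ∑ i, ∑ j, ∑ α, ∑ β, c i j α β * g i j α β t
      = ∑ i, ∑ j, ∑ α, ∑ β, c i j α β * ∫ t, g i j α β t := by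
  have I1 : ∀ i j α β, Integrable (fun t => c i j α β * g i j α β t) volume :=
    fun i j α β => (hg i j α β).const_mul _
  have I2 : ∀ i j α, Integrable (fun t => ∑ β, c i j α β * g i j α β t) volume :=
    fun i j α => integrable_finset_sum _ (fun β _ => I1 i j α β)
  have I3 : ∀ i j, Integrable (fun t => ∑ α, ∑ β, c i j α β * g i j α β t) volume :=
    fun i j => integrable_finset_sum _ (fun α _ => I2 i j α)
  have I4 : ∀ i, Integrable (fun t => ∑ j, ∑ α, ∑ β, c i j α β * g i j α β t) volume :=
    fun i => integrable_finset_sum _ (fun j _ => I3 i j)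
  rw [integral_finset_sum _ (fun i _ => I4 i)]
  refine Finset.sum_congr rfl fun i _ => ?_
  rw [integral_finset_sum _ (fun j _ => I3 i j)]
  refine Finset.sum_congr rfl fun j _ => ?_
  rw [integral_finset_sum _ (fun α _ => I2 i j α)]
  refine Finset.sum_congr rfl fun α _ => ?_
  rw [integral_finset_sum _ (fun β _ => I1 i j α β)]
  refine Finset.sum_congr rfl fun β _ => ?_
  exact integral_const_mul _ _

end VanHoveAux

/-- Frozen-coefficient positivity (Van Hove / Plancherel argument): if the constant
symmetric coefficients a satisfy the strong Hadamard–Legendre condition with ε > 0,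
then for every Schwartz function x : ℝⁿ → ℝ^ν,
∫ Σ a_{ij,αβ} ∂_i x^α ∂_j x^β ≥ ε ∫ Σ (∂_i x^α)². -/
theorem stmt_18 (n ν : ℕ) (hn : 0 < n) (hν : 0 < ν)
    (a : Fin n → Fin n → Fin ν → Fin ν → ℝ)
    (hsymm : ∀ i j α β, a i j α β = a j i β α)
    (ε : ℝ) (hε : 0 < ε)
    (hell : ∀ (ξ : Fin ν → ℝ) (η : Fin n → ℝ),
      ε * (∑ α, (ξ α) ^ 2) * (∑ i, (η i) ^ 2)
        ≤ ∑ i, ∑ j, ∑ α, ∑ β, a i j α β * ξ α * ξ β * η i * η j)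
    (x : SchwartzMap (EuclideanSpace ℝ (Fin n)) (EuclideanSpace ℝ (Fin ν))) :
    ε * ∫ t : EuclideanSpace ℝ (Fin n),
        ∑ i, ∑ α, (fderiv ℝ (⇑x) t (EuclideanSpace.single i 1) α) ^ 2
      ≤ ∫ t : EuclideanSpace ℝ (Fin n),
        ∑ i, ∑ j, ∑ α, ∑ β, a i j α β *
          (fderiv ℝ (⇑x) t (EuclideanSpace.single i 1) α) *
          (fderiv ℝ (⇑x) t (EuclideanSpace.single j 1) β) := by
  classical
  set V := EuclideanSpace ℝ (Fin n) with hV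
  set d : Fin n → Fin ν → V → ℝ :=
    fun i α t => fderiv ℝ (⇑x) t (EuclideanSpace.single i 1) α with hd
  set xc : Fin ν → 𝓢(V, ℂ) :=
    fun α => vhPostCLM (Complex.ofRealCLM.comp (EuclideanSpace.proj α)) x with hxc
  set u : Fin n → Fin ν → 𝓢(V, ℂ) :=
    fun i α => LineDeriv.lineDerivOpCLM ℝ 𝓢(V, ℂ) (EuclideanSpace.single i (1:ℝ)) (xc α) with hu_def
  set ur : Fin n → Fin ν → 𝓢(V, ℝ) :=
    fun i α => LineDeriv.lineDerivOpCLM ℝ 𝓢(V, ℝ) (EuclideanSpace.single i (1:ℝ))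
      (vhPostCLM (EuclideanSpace.proj α) x) with hur_def
  have hfderiv_comp : ∀ (G : Type) (_ : NormedAddCommGroup G) (_ : NormedSpace ℝ G)
      (L : EuclideanSpace ℝ (Fin ν) →L[ℝ] G) (t m : V),
      fderiv ℝ (⇑(vhPostCLM L x)) t m = L (fderiv ℝ (⇑x) t m) := by
    intro G _ _ L t m
    have hcoe : ⇑(vhPostCLM (D := V) L x) = fun s => L (x s) := by
      funext s; exact vhPostCLM_apply L x s
    rw [hcoe]
    have := (L.hasFDerivAt.comp t (x.differentiableAt.hasFDerivAt)).fderiv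
    rw [show (⇑L ∘ ⇑x) = fun s => L (x s) from rfl] at this
    rw [this]; rfl
  have hur : ∀ i α (t : V), ur i α t = d i α t := by
    intro i α t
    rw [hur_def]
    simp only [LineDeriv.lineDerivOpCLM_apply, SchwartzMap.lineDerivOp_apply_eq_fderiv]
    rw [hfderiv_comp ℝ _ _ (EuclideanSpace.proj α) t (EuclideanSpace.single i 1)]
    rfl
  have hu : ∀ i α (t : V), u i α t = ((d i α t : ℝ) : ℂ) := by
    intro i α t
    rw [hu_def]
    simp only [LineDeriv.lineDerivOpCLM_apply, SchwartzMap.lineDerivOp_apply_eq_fderiv]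
    rw [hfderiv_comp ℂ _ _ (Complex.ofRealCLM.comp (EuclideanSpace.proj α)) t
      (EuclideanSpace.single i 1)]
    rfl
  set F : Fin ν → V → ℂ := fun α => 𝓕 ⇑(xc α) with hF
  set G : Fin n → Fin ν → 𝓢(V, ℂ) :=
    fun i α => SchwartzMap.fourierTransformCLM ℝ (u i α) with hG
  have hGcoe : ∀ i α, ⇑(G i α) = 𝓕 ⇑(u i α) := by
    intro i α; rfl
  have hGval : ∀ i α (η : V), G i α η
      = ((2 * π * (η i : ℝ) : ℝ) : ℂ) * Complex.I * F α η := by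
    intro i α η
    have h1 : ⇑(u i α) = fun t => fderiv ℝ (⇑(xc α)) t (EuclideanSpace.single i 1) := by
      funext t; rw [hu_def]; simp only [LineDeriv.lineDerivOpCLM_apply, SchwartzMap.lineDerivOp_apply_eq_fderiv]
    have h2 : (inner ℝ η (EuclideanSpace.single i (1:ℝ)) : ℝ) = η i := by
      rw [real_inner_comm, EuclideanSpace.inner_single_left]
      simp
    rw [hGcoe, h1, vh_fourier_pderiv (xc α) (EuclideanSpace.single i 1) η, h2]
  set H : Fin n → Fin n → Fin ν → Fin ν → V → ℝ :=
    fun i j α β η => (G i α η * conj (G j β η)).re with hH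
  have hHint : ∀ i j α β, Integrable (H i j α β) volume := by
    intro i j α β
    exact (vh_int_mul_conj (G i α) (G j β)).re
  have hdint : ∀ i j α β, Integrable (fun t => d i α t * d j β t) volume := by
    intro i j α β
    have : (fun t => d i α t * d j β t) = fun t => ur i α t * ur j β t := by
      funext t; rw [hur, hur]
    rw [this]; exact vh_int_mul_real _ _
  -- the key integral identity via Parseval
  have hkey : ∀ i j α β, ∫ t, d i α t * d j β t = ∫ η, H i j α β η := by
    intro i j α β
    calc ∫ t, d i α t * d j β t
        = ∫ t, (u i α t * conj (u j β t)).re := by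
          congr 1; funext t
          rw [hu, hu, Complex.conj_ofReal]
          simp
      _ = (∫ t, u i α t * conj (u j β t)).re := integral_re (vh_int_mul_conj (u i α) (u j β))
      _ = (∫ η, G i α η * conj (G j β η)).re := by
          rw [vh_parseval (u i α) (u j β)]
          rfl
      _ = ∫ η, H i j α β η := (integral_re (vh_int_mul_conj (G i α) (G j β))).symm
  -- pointwise formula for H
  have hHval : ∀ i j α β (η : V), H i j α β η
      = (2 * π) ^ 2 * (η i * η j *
          ((F α η).re * (F β η).re + (F α η).im * (F β η).im)) := by
    intro i j α β η
    simp only [hH]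
    rw [hGval, hGval]
    simp only [map_mul, Complex.conj_ofReal, Complex.conj_I]
    simp only [Complex.mul_re, Complex.mul_im, Complex.I_re, Complex.I_im,
      Complex.ofReal_re, Complex.ofReal_im, Complex.conj_re, Complex.conj_im,
      Complex.neg_re, Complex.neg_im]
    ring
  -- pointwise ellipticity bound in frequency space
  have hpoint : ∀ η : V, ε * (∑ i, ∑ α, H i i α α η)
      ≤ ∑ i, ∑ j, ∑ α, ∑ β, a i j α β * H i j α β η := by
    intro η
    have hp := hell (fun α => (F α η).re) (fun i => η i)
    have hq := hell (fun α => (F α η).im) (fun i => η i)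
    have c2 : (0:ℝ) ≤ (2 * π) ^ 2 := by positivity
    have hL : ∑ i, ∑ α, H i i α α η
        = (2 * π) ^ 2 * ((∑ α, ((F α η).re * (F α η).re + (F α η).im * (F α η).im))
            * (∑ i, (η i) ^ 2)) := by
      simp_rw [hHval]
      exact vh_sum_alg1 ((2*π)^2) (fun i => η i)
        (fun α => (F α η).re * (F α η).re + (F α η).im * (F α η).im)
    have hR : ∑ i, ∑ j, ∑ α, ∑ β, a i j α β * H i j α β η
        = (2 * π) ^ 2 * (∑ i, ∑ j, ∑ α, ∑ β,
              a i j α β * (F α η).re * (F β η).re * η i * η j)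
          + (2 * π) ^ 2 * (∑ i, ∑ j, ∑ α, ∑ β,
              a i j α β * (F α η).im * (F β η).im * η i * η j) := by
      simp_rw [hHval]
      exact vh_sum_alg2 ((2*π)^2) a (fun i => η i)
        (fun α => (F α η).re) (fun α => (F α η).im)
    rw [hL, hR]
    have e1 : ∑ α, ((F α η).re * (F α η).re + (F α η).im * (F α η).im)
        = (∑ α, ((F α η).re)^2) + (∑ α, ((F α η).im)^2) := by
      rw [← Finset.sum_add_distrib]
      exact Finset.sum_congr rfl fun α _ => by ring
    rw [e1]
    have hp' : (2 * π) ^ 2 * (ε * (∑ α, ((F α η).re)^2) * (∑ i, (η i)^2))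
        ≤ (2 * π) ^ 2 * (∑ i, ∑ j, ∑ α, ∑ β,
            a i j α β * (F α η).re * (F β η).re * η i * η j) :=
      mul_le_mul_of_nonneg_left hp c2
    have hq' : (2 * π) ^ 2 * (ε * (∑ α, ((F α η).im)^2) * (∑ i, (η i)^2))
        ≤ (2 * π) ^ 2 * (∑ i, ∑ j, ∑ α, ∑ β,
            a i j α β * (F α η).im * (F β η).im * η i * η j) :=
      mul_le_mul_of_nonneg_left hq c2
    calc ε * ((2 * π) ^ 2 * (((∑ α, ((F α η).re)^2) + (∑ α, ((F α η).im)^2))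
            * (∑ i, (η i) ^ 2)))
        = (2 * π) ^ 2 * (ε * (∑ α, ((F α η).re)^2) * (∑ i, (η i)^2))
          + (2 * π) ^ 2 * (ε * (∑ α, ((F α η).im)^2) * (∑ i, (η i)^2)) := by ring
      _ ≤ _ := add_le_add hp' hq'
  -- main inequality with d
  have main : ε * ∫ t, ∑ i, ∑ α, d i α t * d i α t
      ≤ ∫ t, ∑ i, ∑ j, ∑ α, ∑ β, a i j α β * (d i α t * d j β t) := by
    have int_sumH : Integrable (fun η => ∑ i, ∑ α, H i i α α η) volume :=
      integrable_finset_sum _ (fun i _ =>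
        integrable_finset_sum _ (fun α _ => hHint i i α α))
    have int_sumaH : Integrable (fun η => ∑ i, ∑ j, ∑ α, ∑ β, a i j α β * H i j α β η) volume :=
      integrable_finset_sum _ (fun i _ => integrable_finset_sum _ (fun j _ =>
        integrable_finset_sum _ (fun α _ => integrable_finset_sum _ (fun β _ =>
          (hHint i j α β).const_mul _))))
    calc ε * ∫ t, ∑ i, ∑ α, d i α t * d i α t
        = ε * ∑ i, ∑ α, ∫ t, d i α t * d i α t := by
          rw [vh_int_sum2 (fun i α t => d i α t * d i α t) (fun i α => hdint i i α α)]
      _ = ε * ∑ i, ∑ α, ∫ η, H i i α α η := by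
          congr 1
          exact Finset.sum_congr rfl fun i _ => Finset.sum_congr rfl fun α _ => hkey i i α α
      _ = ε * ∫ η, ∑ i, ∑ α, H i i α α η := by
          rw [vh_int_sum2 (fun i α η => H i i α α η) (fun i α => hHint i i α α)]
      _ = ∫ η, ε * ∑ i, ∑ α, H i i α α η := (integral_const_mul _ _).symm
      _ ≤ ∫ η, ∑ i, ∑ j, ∑ α, ∑ β, a i j α β * H i j α β η :=
          integral_mono (int_sumH.const_mul ε) int_sumaH hpoint
      _ = ∑ i, ∑ j, ∑ α, ∑ β, a i j α β * ∫ η, H i j α β η := vh_int_sum4 a H hHint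
      _ = ∑ i, ∑ j, ∑ α, ∑ β, a i j α β * ∫ t, d i α t * d j β t := by
          refine Finset.sum_congr rfl fun i _ => Finset.sum_congr rfl fun j _ =>
            Finset.sum_congr rfl fun α _ => Finset.sum_congr rfl fun β _ => ?_
          rw [hkey i j α β]
      _ = ∫ t, ∑ i, ∑ j, ∑ α, ∑ β, a i j α β * (d i α t * d j β t) :=
          (vh_int_sum4 a (fun i j α β t => d i α t * d j β t) hdint).symm
  simpa only [hd, pow_two, mul_assoc] using main
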